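/- Let s₁,s₂:[0,T]→ℝ be a solution of the explicit slow-down system with s₁(t)>0, s₂(t)>0 and s₁(t)²+s₂(t)² ≤ r₀/2 for all t∈[0,T]. Let η₁,η₂:[0,T]→ℝ be two differentiable solutions of the tangent (slope) equation dη/dt = −2(log λ)·((ψ(u) + u·ψ'(u))·η + s₁s₂·ψ'(u)·(η²+1)), where u = s₁(t)²+s₂(t)², ψ(u)=(u/r₀)^α and ψ'(u)=(α/r₀^α)u^{α−1}, and assume |η₁(t)| ≤ 1 and |η₂(t)| ≤ 1 for all t. Then for every t∈[0,T], |η₁(t)−η₂(t)| ≤ |η₁(0)−η₂(0)|·(s₂(t)/s₂(0))² ≤ |η₁(0)−η₂(0)|·(1 + C₁·s₂(0)^{2α}·t)^{−1/α}. -/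

import Mathlib

open Set

private lemma mono_aux {T : ℝ} {f f' : ℝ → ℝ}
    (hf : ∀ t ∈ Icc (0:ℝ) T, HasDerivAt f (f' t) t)
    (hf' : ∀ t ∈ Icc (0:ℝ) T, 0 ≤ f' t) :
    ∀ t ∈ Icc (0:ℝ) T, f 0 ≤ f t := by
  intro t ht
  have h0 : (0:ℝ) ∈ Icc (0:ℝ) T := ⟨le_refl _, le_trans ht.1 ht.2⟩
  have hmono : MonotoneOn f (Icc (0:ℝ) T) := by
    apply monotoneOn_of_deriv_nonneg (convex_Icc 0 T)
      (fun x hx => (hf x hx).continuousAt.continuousWithinAt)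
    · intro x hx
      rw [interior_Icc] at hx
      exact ((hf x (Ioo_subset_Icc_self hx)).differentiableAt).differentiableWithinAt
    · intro x hx
      rw [interior_Icc] at hx
      rw [(hf x (Ioo_subset_Icc_self hx)).deriv]
      exact hf' x (Ioo_subset_Icc_self hx)
  exact hmono h0 ht ht.1

private lemma anti_aux {T : ℝ} {f f' : ℝ → ℝ}
    (hf : ∀ t ∈ Icc (0:ℝ) T, HasDerivAt f (f' t) t)
    (hf' : ∀ t ∈ Icc (0:ℝ) T, f' t ≤ 0) :
    ∀ t ∈ Icc (0:ℝ) T, f t ≤ f 0 := by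
  intro t ht
  have h0 : (0:ℝ) ∈ Icc (0:ℝ) T := ⟨le_refl _, le_trans ht.1 ht.2⟩
  have hanti : AntitoneOn f (Icc (0:ℝ) T) := by
    apply antitoneOn_of_deriv_nonpos (convex_Icc 0 T)
      (fun x hx => (hf x hx).continuousAt.continuousWithinAt)
    · intro x hx
      rw [interior_Icc] at hx
      exact ((hf x (Ioo_subset_Icc_self hx)).differentiableAt).differentiableWithinAt
    · intro x hx
      rw [interior_Icc] at hx
      rw [(hf x (Ioo_subset_Icc_self hx)).deriv]
      exact hf' x (Ioo_subset_Icc_self hx)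
  exact hanti h0 ht ht.1

/-- Lemma `bad-gamma1` (flow version) of "Thermodynamics of the Katok Map":
two solutions of the tangent (slope) equation along a positive orbit of the
explicit slow-down system staying in `D_{r₀/2}` approach each other at the
rate `(s₂(t)/s₂(0))² ≤ (1 + C₁ s₂(0)^{2α} t)^{-1/α}`. -/
theorem slope_equation_contraction
    (lam α r₀ C₁ T : ℝ) (hlam : 1 < lam) (hα : 0 < α) (hα1 : α < 1)
    (hr₀ : 0 < r₀) (hr₀1 : r₀ < 1)
    (hC₁ : C₁ = 2 * α * Real.log lam / r₀ ^ α)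
    (hT : 0 ≤ T)
    (s₁ s₂ : ℝ → ℝ)
    (hs₁ : ∀ t ∈ Icc (0:ℝ) T,
      HasDerivAt s₁ ((Real.log lam / r₀ ^ α) * s₁ t * (s₁ t ^ 2 + s₂ t ^ 2) ^ α) t)
    (hs₂ : ∀ t ∈ Icc (0:ℝ) T,
      HasDerivAt s₂ (-((Real.log lam / r₀ ^ α) * s₂ t * (s₁ t ^ 2 + s₂ t ^ 2) ^ α)) t)
    (hpos₁ : ∀ t ∈ Icc (0:ℝ) T, 0 < s₁ t)
    (hpos₂ : ∀ t ∈ Icc (0:ℝ) T, 0 < s₂ t)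
    (hsmall : ∀ t ∈ Icc (0:ℝ) T, s₁ t ^ 2 + s₂ t ^ 2 ≤ r₀ / 2)
    (η₁ η₂ : ℝ → ℝ)
    (hη₁ : ∀ t ∈ Icc (0:ℝ) T,
      HasDerivAt η₁ (-(2 * Real.log lam *
        ((((s₁ t ^ 2 + s₂ t ^ 2) / r₀) ^ α +
            (s₁ t ^ 2 + s₂ t ^ 2) * (α / r₀ ^ α * (s₁ t ^ 2 + s₂ t ^ 2) ^ (α - 1))) * η₁ t +
          s₁ t * s₂ t * (α / r₀ ^ α * (s₁ t ^ 2 + s₂ t ^ 2) ^ (α - 1)) *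
            (η₁ t ^ 2 + 1)))) t)
    (hη₂ : ∀ t ∈ Icc (0:ℝ) T,
      HasDerivAt η₂ (-(2 * Real.log lam *
        ((((s₁ t ^ 2 + s₂ t ^ 2) / r₀) ^ α +
            (s₁ t ^ 2 + s₂ t ^ 2) * (α / r₀ ^ α * (s₁ t ^ 2 + s₂ t ^ 2) ^ (α - 1))) * η₂ t +
          s₁ t * s₂ t * (α / r₀ ^ α * (s₁ t ^ 2 + s₂ t ^ 2) ^ (α - 1)) *
            (η₂ t ^ 2 + 1)))) t)
    (hb₁ : ∀ t ∈ Icc (0:ℝ) T, |η₁ t| ≤ 1)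
    (hb₂ : ∀ t ∈ Icc (0:ℝ) T, |η₂ t| ≤ 1) :
    ∀ t ∈ Icc (0:ℝ) T,
      |η₁ t - η₂ t| ≤ |η₁ 0 - η₂ 0| * (s₂ t / s₂ 0) ^ 2 ∧
      |η₁ 0 - η₂ 0| * (s₂ t / s₂ 0) ^ 2 ≤
        |η₁ 0 - η₂ 0| * (1 + C₁ * s₂ 0 ^ (2 * α) * t) ^ (-(1 / α)) := by
  intro t ht
  have hL : 0 < Real.log lam := Real.log_pos hlam
  have hR : 0 < r₀ ^ α := Real.rpow_pos_of_pos hr₀ α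
  have h0mem : (0:ℝ) ∈ Icc (0:ℝ) T := ⟨le_rfl, hT⟩
  have hu : ∀ τ ∈ Icc (0:ℝ) T, 0 < s₁ τ ^ 2 + s₂ τ ^ 2 := fun τ hτ =>
    add_pos (pow_pos (hpos₁ τ hτ) 2) (pow_pos (hpos₂ τ hτ) 2)
  have hq0 : 0 < s₂ 0 := hpos₂ 0 h0mem
  have hqt : 0 < s₂ t := hpos₂ t ht
  -- Part A : the slope difference contracts like s₂²
  set G : ℝ → ℝ := fun τ =>
    -(4 * Real.log lam * (α / r₀ ^ α * (s₁ τ ^ 2 + s₂ τ ^ 2) ^ (α - 1)) *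
        ((s₁ τ ^ 2 + s₂ τ ^ 2) + s₁ τ * s₂ τ * (η₁ τ + η₂ τ))) *
      (η₁ τ - η₂ τ) ^ 2 / s₂ τ ^ 4 with hGdef
  have hg : ∀ τ ∈ Icc (0:ℝ) T,
      HasDerivAt (fun x => (η₁ x - η₂ x) ^ 2 / s₂ x ^ 4) (G τ) τ := by
    intro τ hτ
    have hqτ := hpos₂ τ hτ
    have huτ := hu τ hτ
    have hD := (hη₁ τ hτ).sub (hη₂ τ hτ)
    have hnum := hD.pow 2
    have hden := (hs₂ τ hτ).pow 4
    have hdiv := hnum.div hden (pow_ne_zero 4 hqτ.ne')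
    refine hdiv.congr_deriv ?_
    have hψ : ((s₁ τ ^ 2 + s₂ τ ^ 2) / r₀) ^ α
        = (s₁ τ ^ 2 + s₂ τ ^ 2) ^ α / r₀ ^ α := Real.div_rpow huτ.le hr₀.le α
    have hP : (s₁ τ ^ 2 + s₂ τ ^ 2) ^ α
        = (s₁ τ ^ 2 + s₂ τ ^ 2) ^ (α - 1) * (s₁ τ ^ 2 + s₂ τ ^ 2) := by
      rw [← Real.rpow_add_one huτ.ne' (α - 1)]
      congr 1
      ring
    simp only [hGdef]
    rw [hψ, hP]
    simp only [Pi.pow_apply, Pi.sub_apply]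
    field_simp
    ring
  have hGle : ∀ τ ∈ Icc (0:ℝ) T, G τ ≤ 0 := by
    intro τ hτ
    have hqτ := hpos₂ τ hτ
    have hpτ := hpos₁ τ hτ
    have huτ := hu τ hτ
    have hS : (0:ℝ) < (s₁ τ ^ 2 + s₂ τ ^ 2) ^ (α - 1) := Real.rpow_pos_of_pos huτ _
    have hsum : -2 ≤ η₁ τ + η₂ τ := by
      have h1 := abs_le.mp (hb₁ τ hτ)
      have h2 := abs_le.mp (hb₂ τ hτ)
      linarith [h1.1, h2.1]
    have hbr : 0 ≤ (s₁ τ ^ 2 + s₂ τ ^ 2) + s₁ τ * s₂ τ * (η₁ τ + η₂ τ) := by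
      nlinarith [sq_nonneg (s₁ τ - s₂ τ), mul_pos hpτ hqτ,
        mul_le_mul_of_nonneg_left hsum (mul_pos hpτ hqτ).le]
    simp only [hGdef]
    apply div_nonpos_of_nonpos_of_nonneg _ (by positivity)
    apply mul_nonpos_of_nonpos_of_nonneg _ (sq_nonneg _)
    have h1 : 0 ≤ 4 * Real.log lam * (α / r₀ ^ α * (s₁ τ ^ 2 + s₂ τ ^ 2) ^ (α - 1)) *
        ((s₁ τ ^ 2 + s₂ τ ^ 2) + s₁ τ * s₂ τ * (η₁ τ + η₂ τ)) := by
      apply mul_nonneg _ hbr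
      positivity
    linarith
  have hA := anti_aux hg hGle t ht
  have hqt4 : (0:ℝ) < s₂ t ^ 4 := pow_pos hqt 4
  have hA2 : (η₁ t - η₂ t) ^ 2 ≤ (|η₁ 0 - η₂ 0| * (s₂ t / s₂ 0) ^ 2) ^ 2 := by
    have h2 : (|η₁ 0 - η₂ 0| * (s₂ t / s₂ 0) ^ 2) ^ 2
        = (η₁ 0 - η₂ 0) ^ 2 / s₂ 0 ^ 4 * s₂ t ^ 4 := by
      rw [mul_pow, sq_abs, div_pow]
      field_simp
    rw [h2]
    exact (div_le_iff₀ hqt4).mp hA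
  have hAfinal : |η₁ t - η₂ t| ≤ |η₁ 0 - η₂ 0| * (s₂ t / s₂ 0) ^ 2 := by
    have h3 := Real.sqrt_le_sqrt hA2
    have habs : abs (|η₁ 0 - η₂ 0| * (s₂ t / s₂ 0) ^ 2) = |η₁ 0 - η₂ 0| * (s₂ t / s₂ 0) ^ 2 :=
      abs_of_nonneg (by positivity)
    rwa [Real.sqrt_sq_eq_abs, Real.sqrt_sq_eq_abs, habs] at h3
  -- Part B : decay rate of s₂²
  set H : ℝ → ℝ := fun τ => (s₂ τ ^ 2) ^ (-α) - C₁ * τ with hHdef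
  set H' : ℝ → ℝ := fun τ =>
    (2 * s₂ τ ^ 1 * (-(Real.log lam / r₀ ^ α * s₂ τ * (s₁ τ ^ 2 + s₂ τ ^ 2) ^ α))) * (-α)
      * (s₂ τ ^ 2) ^ (-α - 1) - C₁ with hH'def
  have hH : ∀ τ ∈ Icc (0:ℝ) T, HasDerivAt H (H' τ) τ := by
    intro τ hτ
    have hqτ := hpos₂ τ hτ
    have h1 := ((hs₂ τ hτ).pow 2).rpow_const (p := -α) (Or.inl (by rw [Pi.pow_apply]; positivity))
    have h2 : HasDerivAt (fun x => C₁ * x) C₁ τ := by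
      simpa using (hasDerivAt_id τ).const_mul C₁
    have h3 := h1.sub h2
    refine h3.congr_deriv ?_
    norm_num [hH'def]
  have hH'nonneg : ∀ τ ∈ Icc (0:ℝ) T, 0 ≤ H' τ := by
    intro τ hτ
    have hqτ := hpos₂ τ hτ
    have huτ := hu τ hτ
    have hv : (0:ℝ) < s₂ τ ^ 2 := pow_pos hqτ 2
    have hmono : (s₂ τ ^ 2) ^ α ≤ (s₁ τ ^ 2 + s₂ τ ^ 2) ^ α :=
      Real.rpow_le_rpow hv.le (by nlinarith [sq_nonneg (s₁ τ)]) hα.le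
    have hone : (s₂ τ ^ 2) ^ α * ((s₂ τ ^ 2) ^ (-α - 1) * s₂ τ ^ 2) = 1 := by
      rw [← mul_assoc, ← Real.rpow_add hv, show α + (-α - 1) = -1 by ring,
        Real.rpow_neg_one]
      field_simp
    have h5 : (1:ℝ) ≤ (s₁ τ ^ 2 + s₂ τ ^ 2) ^ α * ((s₂ τ ^ 2) ^ (-α - 1) * s₂ τ ^ 2) := by
      calc (1:ℝ) = (s₂ τ ^ 2) ^ α * ((s₂ τ ^ 2) ^ (-α - 1) * s₂ τ ^ 2) := hone.symm
        _ ≤ (s₁ τ ^ 2 + s₂ τ ^ 2) ^ α * ((s₂ τ ^ 2) ^ (-α - 1) * s₂ τ ^ 2) :=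
          mul_le_mul_of_nonneg_right hmono (by positivity)
    simp only [hH'def]
    have h7 : (2 * s₂ τ ^ 1 * (-(Real.log lam / r₀ ^ α * s₂ τ *
          (s₁ τ ^ 2 + s₂ τ ^ 2) ^ α))) * (-α) * (s₂ τ ^ 2) ^ (-α - 1) - C₁
        = 2 * α * (Real.log lam / r₀ ^ α) *
            ((s₁ τ ^ 2 + s₂ τ ^ 2) ^ α * ((s₂ τ ^ 2) ^ (-α - 1) * s₂ τ ^ 2)) - C₁ := by
      ring
    rw [h7, hC₁]
    have h8 : 2 * α * (Real.log lam / r₀ ^ α) * 1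
        ≤ 2 * α * (Real.log lam / r₀ ^ α) *
            ((s₁ τ ^ 2 + s₂ τ ^ 2) ^ α * ((s₂ τ ^ 2) ^ (-α - 1) * s₂ τ ^ 2)) :=
      mul_le_mul_of_nonneg_left h5 (by positivity)
    have hC' : 2 * α * Real.log lam / r₀ ^ α = 2 * α * (Real.log lam / r₀ ^ α) := by ring
    rw [hC']
    linarith
  have hB := mono_aux hH hH'nonneg t ht
  simp only [hHdef] at hB
  have hv0 : (0:ℝ) < s₂ 0 ^ 2 := pow_pos hq0 2
  have hvt : (0:ℝ) < s₂ t ^ 2 := pow_pos hqt 2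
  have hC₁pos : 0 < C₁ := by rw [hC₁]; positivity
  have htnn : 0 ≤ t := ht.1
  have hXY : (s₂ 0 ^ 2) ^ (-α) + C₁ * t ≤ (s₂ t ^ 2) ^ (-α) := by linarith
  have hY : (0:ℝ) < (s₂ 0 ^ 2) ^ (-α) + C₁ * t := by positivity
  have hexp1 : (-α) * (-(1 / α)) = 1 := by field_simp
  have hrp := Real.rpow_le_rpow_of_nonpos hY hXY
    (neg_nonpos.mpr (by positivity : (0:ℝ) ≤ 1 / α))
  have hLHS : ((s₂ t ^ 2) ^ (-α)) ^ (-(1 / α)) = s₂ t ^ 2 := by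
    rw [← Real.rpow_mul hvt.le, hexp1, Real.rpow_one]
  have hv0α : (s₂ 0 ^ 2) ^ (-α) * (s₂ 0 ^ 2) ^ α = 1 := by
    rw [← Real.rpow_add hv0]
    norm_num
  have hsplit : (s₂ 0 ^ 2) ^ (-α) + C₁ * t
      = (s₂ 0 ^ 2) ^ (-α) * (1 + C₁ * (s₂ 0 ^ 2) ^ α * t) := by
    linear_combination (-(C₁ * t)) * hv0α
  have hc1 : (0:ℝ) < 1 + C₁ * (s₂ 0 ^ 2) ^ α * t := by positivity
  have hRHS : ((s₂ 0 ^ 2) ^ (-α) + C₁ * t) ^ (-(1 / α))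
      = s₂ 0 ^ 2 * (1 + C₁ * (s₂ 0 ^ 2) ^ α * t) ^ (-(1 / α)) := by
    rw [hsplit, Real.mul_rpow (by positivity) hc1.le]
    congr 1
    rw [← Real.rpow_mul hv0.le, hexp1, Real.rpow_one]
  have hvB : s₂ t ^ 2 ≤ s₂ 0 ^ 2 * (1 + C₁ * (s₂ 0 ^ 2) ^ α * t) ^ (-(1 / α)) := by
    rw [← hRHS, ← hLHS]
    exact hrp
  have hexp2 : s₂ 0 ^ (2 * α) = (s₂ 0 ^ 2) ^ α := by
    rw [← Real.rpow_natCast (s₂ 0) 2, ← Real.rpow_mul hq0.le]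
    norm_num
  have hBfinal : (s₂ t / s₂ 0) ^ 2 ≤ (1 + C₁ * s₂ 0 ^ (2 * α) * t) ^ (-(1 / α)) := by
    rw [hexp2, div_pow, div_le_iff₀ hv0]
    linarith [hvB]
  exact ⟨hAfinal, mul_le_mul_of_nonneg_left hBfinal (abs_nonneg _)⟩
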